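/- Let X be a real random variable with E X = 0, E X² = σ² ∈ (0,∞), and let F(x) = P(X < xσ). Suppose sup_x |F(x) − Φ(x)| ≤ δ for some δ ≥ 0, where Φ is the standard normal CDF. Then E|X| ≥ σ·(2∫₀^M Φ(−t) dt − 2δM) for every M > 0. -/

import Mathlib

open MeasureTheory ProbabilityTheory

/-- The standard normal cumulative distribution function. -/
noncomputable def stdNormalCDF (x : ℝ) : ℝ :=
  ((gaussianReal 0 1) (Set.Iic x)).toReal

lemma stdNormalCDF_neg (t : ℝ) : stdNormalCDF (-t) = 1 - stdNormalCDF t := by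
  set ν := gaussianReal 0 1 with hν
  have hat : ∀ x : ℝ, ν {x} = 0 := fun x =>
    gaussianReal_absolutelyContinuous 0 one_ne_zero (measure_singleton x)
  have hmap : ν.map (fun x => (-1 : ℝ) * x) = ν := by
    rw [hν, gaussianReal_map_const_mul]
    norm_num
  have h1 : ν (Set.Iic (-t)) = ν (Set.Ici t) := by
    conv_lhs => rw [← hmap]
    rw [Measure.map_apply (measurable_const_mul _) measurableSet_Iic]
    congr 1
    ext x
    simp only [Set.mem_preimage, Set.mem_Iic, Set.mem_Ici]
    constructor <;> intro h <;> nlinarith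
  have h2 : ν (Set.Iic t) = ν (Set.Iio t) := by
    refine le_antisymm ?_ (measure_mono Set.Iio_subset_Iic_self)
    calc ν (Set.Iic t) = ν (Set.Iio t ∪ {t}) := by
          congr 1; ext x; simp [le_iff_lt_or_eq]
      _ ≤ ν (Set.Iio t) + ν {t} := measure_union_le _ _
      _ = ν (Set.Iio t) := by rw [hat t, add_zero]
  have h3 : ν (Set.Ici t) = 1 - ν (Set.Iio t) := by
    have := prob_compl_eq_one_sub (α := ℝ) (μ := ν) measurableSet_Iio (s := Set.Iio t)
    rwa [Set.compl_Iio] at this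
  have hfin : ν (Set.Iio t) ≤ 1 := prob_le_one
  rw [stdNormalCDF, stdNormalCDF, h1, h3, h2,
    ENNReal.toReal_sub_of_le hfin ENNReal.one_ne_top, ENNReal.toReal_one]

/-- Let `X` be a real random variable with `EX = 0`, `EX² = σ² ∈ (0,∞)`,
and `F(x) = P(X < xσ)`. If `sup_x |F(x) − Φ(x)| ≤ δ`, then for every `M > 0`,
`E|X| ≥ σ(2∫₀^M Φ(−t) dt − 2δM)`. -/
theorem stmt13 {Ω : Type*} [MeasureSpace Ω] [IsProbabilityMeasure (ℙ : Measure Ω)]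
    (X : Ω → ℝ) (hmeas : Measurable X)
    (hXi : Integrable X) (hX2 : Integrable (fun ω => X ω ^ 2))
    (hmean : ∫ ω, X ω = 0)
    (σ : ℝ) (hσ : 0 < σ) (hvar : ∫ ω, X ω ^ 2 = σ ^ 2)
    (F : ℝ → ℝ) (hF : ∀ x, F x = (ℙ {ω | X ω < x * σ}).toReal)
    (δ : ℝ) (hδ0 : 0 ≤ δ) (hδ : ∀ x, |F x - stdNormalCDF x| ≤ δ) :
    ∀ M > 0, σ * (2 * (∫ t in (0:ℝ)..M, stdNormalCDF (-t)) - 2 * δ * M) ≤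
      ∫ ω, |X ω| := by
  intro M hM
  set g : ℝ → ℝ := fun t => (ℙ {a | t ≤ |X a|}).toReal with hg
  have hYi : Integrable (fun ω => |X ω|) := hXi.abs
  have hYnn : 0 ≤ᵐ[ℙ] fun ω => |X ω| := Filter.Eventually.of_forall fun ω => abs_nonneg _
  have key : ∫ ω, |X ω| = ∫ t in Set.Ioi (0:ℝ), g t :=
    hYi.integral_eq_integral_meas_le hYnn
  -- g is antitone
  have hganti : Antitone g := by
    intro s t hst
    apply ENNReal.toReal_mono (measure_ne_top _ _)
    exact measure_mono fun a ha => le_trans hst ha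
  -- g integrable on Ioi 0
  have hgint : IntegrableOn g (Set.Ioi (0:ℝ)) := by
    refine ⟨(hganti.measurable.aestronglyMeasurable).restrict, ?_⟩
    rw [hasFiniteIntegral_iff_ofReal (Filter.Eventually.of_forall fun t => ENNReal.toReal_nonneg)]
    have : ∀ t : ℝ, ENNReal.ofReal (g t) = ℙ {a | t ≤ |X a|} := fun t =>
      ENNReal.ofReal_toReal (measure_ne_top _ _)
    simp_rw [ENNReal.ofReal_toReal (measure_ne_top _ _)]
    rw [← lintegral_eq_lintegral_meas_le ℙ hYnn (hmeas.abs.aemeasurable)]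
    exact hYi.lintegral_lt_top
  -- lower bound function
  set φ : ℝ → ℝ := fun t => 2 * stdNormalCDF (-(t / σ)) - 2 * δ with hφ
  have hΦanti : Antitone fun t : ℝ => stdNormalCDF (-(t / σ)) := by
    intro s t hst
    apply ENNReal.toReal_mono (measure_ne_top _ _)
    apply measure_mono
    apply Set.Iic_subset_Iic.2
    have hd : s / σ ≤ t / σ := by gcongr
    linarith
  have hφanti : Antitone φ := fun s t hst => by
    have := hΦanti hst
    simp only [hφ]; linarith
  have hφint : IntegrableOn φ (Set.Ioc 0 (σ * M)) := by
    have := hφanti.intervalIntegrable (a := 0) (b := σ * M) (μ := volume)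
    rwa [intervalIntegrable_iff_integrableOn_Ioc_of_le (by positivity)] at this
  -- pointwise bound on Ioc 0 (σ M)
  have hpt : ∀ t ∈ Set.Ioc (0:ℝ) (σ * M), φ t ≤ g t := by
    intro t ht
    have ht0 : 0 < t := ht.1
    have hts : t / σ * σ = t := div_mul_cancel₀ t hσ.ne'
    -- split the event
    have hsplit : {a | t ≤ |X a|} = {a | X a ≤ -t} ∪ {a | t ≤ X a} := by
      ext a
      simp only [Set.mem_setOf_eq, Set.mem_union, le_abs, le_neg]
      tauto
    have hdisj : Disjoint {a | X a ≤ -t} {a | t ≤ X a} := by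
      rw [Set.disjoint_left]
      intro a h1 h2
      simp only [Set.mem_setOf_eq] at h1 h2
      linarith
    have hm1 : MeasurableSet {a | X a ≤ -t} := hmeas measurableSet_Iic
    have hm2 : MeasurableSet {a | t ≤ X a} := hmeas measurableSet_Ici
    have hgval : g t = (ℙ {a | X a ≤ -t}).toReal + (ℙ {a | t ≤ X a}).toReal := by
      rw [hg]
      simp only
      rw [hsplit, measure_union hdisj hm2, ENNReal.toReal_add (measure_ne_top _ _)
        (measure_ne_top _ _)]
    -- ℙ(X ≤ -t) ≥ F(-(t/σ))
    have h1 : F (-(t / σ)) ≤ (ℙ {a | X a ≤ -t}).toReal := by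
      rw [hF]
      apply ENNReal.toReal_mono (measure_ne_top _ _)
      apply measure_mono
      intro a ha
      simp only [Set.mem_setOf_eq] at ha ⊢
      have : -(t / σ) * σ = -t := by rw [neg_mul, hts]
      rw [this] at ha
      exact ha.le
    -- ℙ(t ≤ X) ≥ 1 - F(t/σ)
    have h2 : 1 - F (t / σ) ≤ (ℙ {a | t ≤ X a}).toReal := by
      rw [hF, hts]
      have hc : {a | t ≤ X a} = {ω | X ω < t}ᶜ := by
        ext a; simp [not_lt]
      have hcc := prob_compl_eq_one_sub (μ := ℙ) (s := {ω | X ω < t})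
        (hmeas measurableSet_Iio)
      rw [hc, hcc, ENNReal.toReal_sub_of_le prob_le_one ENNReal.one_ne_top,
        ENNReal.toReal_one]
    -- CDF bounds
    have hb1 : stdNormalCDF (-(t / σ)) - δ ≤ F (-(t / σ)) := by
      have := abs_le.1 (hδ (-(t / σ))); linarith [this.1]
    have hb2 : F (t / σ) ≤ stdNormalCDF (t / σ) + δ := by
      have := abs_le.1 (hδ (t / σ)); linarith [this.2]
    have hsym : stdNormalCDF (-(t / σ)) = 1 - stdNormalCDF (t / σ) := stdNormalCDF_neg _
    rw [hgval, hφ]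
    simp only
    linarith
  -- chain of inequalities
  have step1 : ∫ t in Set.Ioc (0:ℝ) (σ * M), φ t ≤ ∫ t in Set.Ioc (0:ℝ) (σ * M), g t :=
    setIntegral_mono_on hφint (hgint.mono_set Set.Ioc_subset_Ioi_self) measurableSet_Ioc hpt
  have step2 : ∫ t in Set.Ioc (0:ℝ) (σ * M), g t ≤ ∫ t in Set.Ioi (0:ℝ), g t := by
    apply setIntegral_mono_set hgint
    · exact Filter.Eventually.of_forall fun t => ENNReal.toReal_nonneg
    · exact HasSubset.Subset.eventuallyLE Set.Ioc_subset_Ioi_self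
  -- value of ∫ φ
  have hΦii : IntervalIntegrable (fun t => stdNormalCDF (-(t / σ))) volume 0 (σ * M) :=
    hΦanti.intervalIntegrable
  have hval : ∫ t in Set.Ioc (0:ℝ) (σ * M), φ t
      = 2 * (σ * ∫ t in (0:ℝ)..M, stdNormalCDF (-t)) - 2 * δ * (σ * M) := by
    rw [← intervalIntegral.integral_of_le (by positivity)]
    have : ∫ t in (0:ℝ)..(σ * M), φ t
        = 2 * (∫ t in (0:ℝ)..(σ * M), stdNormalCDF (-(t / σ))) - 2 * δ * (σ * M) := by
      rw [hφ]
      rw [intervalIntegral.integral_sub (hΦii.const_mul 2) intervalIntegrable_const,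
        intervalIntegral.integral_const_mul, intervalIntegral.integral_const]
      simp [smul_eq_mul]
      ring
    rw [this]
    have hcomp : (∫ t in (0:ℝ)..(σ * M), stdNormalCDF (-(t / σ)))
        = σ * ∫ t in (0:ℝ)..M, stdNormalCDF (-t) := by
      have := intervalIntegral.integral_comp_div (a := 0) (b := σ * M)
        (f := fun x => stdNormalCDF (-x)) hσ.ne'
      rw [this, zero_div, mul_div_cancel_left₀ M hσ.ne', smul_eq_mul]
    rw [hcomp]
  rw [key]
  calc σ * (2 * (∫ t in (0:ℝ)..M, stdNormalCDF (-t)) - 2 * δ * M)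
      = 2 * (σ * ∫ t in (0:ℝ)..M, stdNormalCDF (-t)) - 2 * δ * (σ * M) := by ring
    _ = ∫ t in Set.Ioc (0:ℝ) (σ * M), φ t := hval.symm
    _ ≤ ∫ t in Set.Ioc (0:ℝ) (σ * M), g t := step1
    _ ≤ ∫ t in Set.Ioi (0:ℝ), g t := step2
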